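/- Let q be a prime power, m ≥ 1, and let C be a linear code of length n and dimension k over F_{q^m}. Let S ⊆ F_{q^m} be an F_q-subspace of dimension λ ≤ m. Then dim_{F_q}(C|_S) ≥ km − n(m − λ). -/

import Mathlib

open Module

/-- The subspace subcode of a code `C ⊆ F^n`, with respect to `K`-subspaces `S i ⊆ F`:
the `K`-linear code of codewords of `C` whose `i`-th entry lies in `S i` for every `i`. -/
def subspaceSubcode {K F : Type*} [Field K] [Field F] [Algebra K F] {n : ℕ}
    (C : Submodule F (Fin n → F)) (S : Fin n → Submodule K F) :
    Submodule K (Fin n → F) :=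
  C.restrictScalars K ⊓ Submodule.pi Set.univ S

/-- A pi submodule over `univ` is linearly equivalent to the product of the submodules. -/
def piSubmoduleEquiv {R M : Type*} [CommRing R] [AddCommGroup M] [Module R M] {n : ℕ}
    (S : Fin n → Submodule R M) :
    ↥(Submodule.pi Set.univ S) ≃ₗ[R] Π i, ↥(S i) where
  toFun x := fun i => ⟨x.1 i, x.2 i (Set.mem_univ i)⟩
  map_add' _ _ := rfl
  map_smul' _ _ := rfl
  invFun y := ⟨fun i => (y i).1, fun i _ => (y i).2⟩
  left_inv _ := rfl
  right_inv _ := rfl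

/-- if `C` is an `[n,k]` code over `F_{q^m}` and `S` is a `λ`-dimensional
`F_q`-subspace of `F_{q^m}` with `λ ≤ m`, then `dim_{F_q} (C|_S) ≥ km - n(m - λ)`. -/
theorem stmt_0 {K F : Type*} [Field K] [Fintype K] [Field F] [Algebra K F]
    [FiniteDimensional K F] {n k m lam : ℕ} (hm : finrank K F = m) (hm1 : 1 ≤ m)
    (C : Submodule F (Fin n → F)) (hk : finrank F C = k)
    (S : Submodule K F) (hlam : finrank K S = lam) (hlm : lam ≤ m) :
    (k * m : ℤ) - n * ((m : ℤ) - lam) ≤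
      (finrank K (subspaceSubcode C fun _ => S) : ℤ) := by
  have hFD : FiniteDimensional K (Fin n → F) := inferInstance
  set A := C.restrictScalars K with hA
  set B := Submodule.pi Set.univ (fun _ : Fin n => S) with hB
  have hCfd : FiniteDimensional F C := inferInstance
  -- dim A = k * m
  have hAdim : finrank K A = k * m := by
    have h1 : finrank K A = finrank K C :=
      ((Submodule.restrictScalarsEquiv K F _ C).restrictScalars K).finrank_eq
    have h2 : finrank K F * finrank F C = finrank K C :=
      finrank_mul_finrank K F C
    rw [h1, ← h2, hm, hk, Nat.mul_comm]
  -- dim B = n * lam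
  have hBdim : finrank K B = n * lam := by
    have h1 : finrank K B = finrank K (Π _ : Fin n, ↥S) :=
      (piSubmoduleEquiv (fun _ : Fin n => S)).finrank_eq
    rw [h1, Module.finrank_pi_fintype, hlam]
    simp [Finset.sum_const, Finset.card_univ]
  have hsum := Submodule.finrank_sup_add_finrank_inf_eq A B
  have htop : finrank K (A ⊔ B : Submodule K (Fin n → F)) ≤ n * m := by
    have := Submodule.finrank_le (A ⊔ B)
    rwa [Module.finrank_pi_fintype, hm, Finset.sum_const, Finset.card_univ,
      Fintype.card_fin, smul_eq_mul] at this
  have hgoal : finrank K (subspaceSubcode C fun _ => S) = finrank K (A ⊓ B : Submodule K (Fin n → F)) := rfl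
  rw [hgoal]
  have : k * m + n * lam ≤ finrank K (A ⊔ B : Submodule K (Fin n → F)) + finrank K (A ⊓ B : Submodule K (Fin n → F)) := by
    rw [hsum, hAdim, hBdim]
  push_cast
  have h2 : (k * m + n * lam : ℤ) ≤ n * m + finrank K (A ⊓ B : Submodule K (Fin n → F)) := by
    exact_mod_cast le_trans this (by exact_mod_cast Nat.add_le_add_right htop _)
  linarith
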